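/- (Improved two-sided L₂-error bound) Let Σ₁, Σ₂ ∈ ℝ^{p×p} be symmetric with Λ(k; Σ₂) > 0, Γ₁, Γ₂ ∈ ℝ^p, and suppose RIP(k, Σ₁ − Σ₂) ≤ Λ(k; Σ₂)/2. Then for all M ∈ 𝓜(k), (1/2) ‖[Σ₂(M)]^{-1}(Γ₁(M) − Σ₁(M) β_M(Σ₂, Γ₂))‖₂ ≤ ‖β_M(Σ₁, Γ₁) − β_M(Σ₂, Γ₂)‖₂ ≤ 2 ‖[Σ₂(M)]^{-1}(Γ₁(M) − Σ₁(M) β_M(Σ₂, Γ₂))‖₂. -/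

import Mathlib

open scoped BigOperators
open MeasureTheory ProbabilityTheory Real Matrix

noncomputable section

/-- The Euclidean (`ℓ₂`) norm of a finitely indexed real vector. -/
def norm2 {ι : Type*} [Fintype ι] (v : ι → ℝ) : ℝ := Real.sqrt (∑ i, (v i) ^ 2)

/-- The `ℓ₁` norm of a finitely indexed real vector. -/
def norm1 {ι : Type*} [Fintype ι] (v : ι → ℝ) : ℝ := ∑ i, |v i|

/-- The `ℓ₂ → ℓ₂` operator norm of a square real matrix. -/
def opNorm {ι : Type*} [Fintype ι] (A : Matrix ι ι ℝ) : ℝ :=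
  sSup {r | ∃ x : ι → ℝ, norm2 x ≤ 1 ∧ r = norm2 (A.mulVec x)}

/-- The collection of models: nonempty subsets of `{1, …, p}` of cardinality at most `k`. -/
def Models (p k : ℕ) : Set (Finset (Fin p)) := {M | 1 ≤ M.card ∧ M.card ≤ k}

/-- The subvector of `v` with indices in the model `M`. -/
def subv {p : ℕ} (v : Fin p → ℝ) (M : Finset (Fin p)) : {x // x ∈ M} → ℝ := fun i => v i.1

/-- The submatrix of `A` with row and column indices in the model `M`. -/
def subm {p : ℕ} (A : Matrix (Fin p) (Fin p) ℝ) (M : Finset (Fin p)) :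
    Matrix {x // x ∈ M} {x // x ∈ M} ℝ := fun i j => A i.1 j.1

/-- `RIP(k, A)`: the maximal `k`-sparse operator norm `sup_{M ∈ 𝓜(k)} ‖A(M)‖_op`. -/
def RIP {p : ℕ} (k : ℕ) (A : Matrix (Fin p) (Fin p) ℝ) : ℝ :=
  ⨆ M : Models p k, opNorm (subm A M.1)

/-- `𝒟(k, v) = sup_{M ∈ 𝓜(k)} ‖v(M)‖₂`. -/
def Dnorm {p : ℕ} (k : ℕ) (v : Fin p → ℝ) : ℝ :=
  ⨆ M : Models p k, norm2 (subv v M.1)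

/-- `θ` has at most `k` nonzero coordinates. -/
def sparse {p : ℕ} (k : ℕ) (θ : Fin p → ℝ) : Prop := Set.ncard {j | θ j ≠ 0} ≤ k

/-- The minimal `k`-sparse eigenvalue
`Λ(k; A) = inf{θᵀAθ/‖θ‖₂² : θ ≠ 0, θ k-sparse}`. -/
def Lam {p : ℕ} (k : ℕ) (A : Matrix (Fin p) (Fin p) ℝ) : ℝ :=
  sInf {r | ∃ θ : Fin p → ℝ, θ ≠ 0 ∧ sparse k θ ∧ r = θ ⬝ᵥ A.mulVec θ / norm2 θ ^ 2}

/-- The linear regression map `β_M(Σ, Γ) = (Σ(M))⁻¹ Γ(M)`. -/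
def betaM {p : ℕ} (M : Finset (Fin p)) (S : Matrix (Fin p) (Fin p) ℝ) (G : Fin p → ℝ) :
    {x // x ∈ M} → ℝ := (subm S M)⁻¹.mulVec (subv G M)

/-- `S_{2,k}(Σ, Γ) = sup_{M ∈ 𝓜(k)} ‖β_M(Σ, Γ)‖₂`. -/
def S2k {p : ℕ} (k : ℕ) (S : Matrix (Fin p) (Fin p) ℝ) (G : Fin p → ℝ) : ℝ :=
  ⨆ M : Models p k, norm2 (betaM M.1 S G)

/-- `S_{1,k}(Σ, Γ) = sup_{M ∈ 𝓜(k)} ‖β_M(Σ, Γ)‖₁`. -/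
def S1k {p : ℕ} (k : ℕ) (S : Matrix (Fin p) (Fin p) ℝ) (G : Fin p → ℝ) : ℝ :=
  ⨆ M : Models p k, norm1 (betaM M.1 S G)

/-- The `k`-sparse Euclidean unit ball `Θ_k ⊆ ℝ^p`. -/
def Theta (p k : ℕ) : Set (Fin p → ℝ) := {θ | sparse k θ ∧ norm2 θ ≤ 1}

/-- The elementwise maximum norm `|||A|||_∞` of a matrix. -/
def normInfMat {p : ℕ} (A : Matrix (Fin p) (Fin p) ℝ) : ℝ :=
  ⨆ q : Fin p × Fin p, |A q.1 q.2|

/-- The supremum norm `‖v‖_∞` of a vector. -/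
def normInfVec {p : ℕ} (v : Fin p → ℝ) : ℝ := ⨆ j, |v j|


section helpers
variable {ι : Type*} [Fintype ι]

lemma norm2_eq_norm (v : ι → ℝ) :
    norm2 v = ‖(WithLp.equiv 2 (ι → ℝ)).symm v‖ := by
  simp [norm2, EuclideanSpace.norm_eq, Real.norm_eq_abs, sq_abs]

lemma norm2_nonneg (v : ι → ℝ) : 0 ≤ norm2 v := by
  rw [norm2_eq_norm]; exact norm_nonneg _

lemma norm2_sq (v : ι → ℝ) : norm2 v ^ 2 = ∑ i, (v i) ^ 2 :=
  Real.sq_sqrt (by positivity)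

lemma norm2_zero : norm2 (0 : ι → ℝ) = 0 := by simp [norm2]

lemma norm2_eq_zero {v : ι → ℝ} (h : norm2 v = 0) : v = 0 := by
  rw [norm2_eq_norm, norm_eq_zero] at h
  simpa using congrArg (WithLp.equiv 2 (ι → ℝ)) h

lemma norm2_pos {v : ι → ℝ} (h : v ≠ 0) : 0 < norm2 v :=
  lt_of_le_of_ne (norm2_nonneg v) (fun h0 => h (norm2_eq_zero h0.symm))

lemma norm2_smul (c : ℝ) (v : ι → ℝ) : norm2 (c • v) = |c| * norm2 v := by
  rw [norm2_eq_norm, norm2_eq_norm, WithLp.equiv_symm_apply, WithLp.toLp_smul, norm_smul, Real.norm_eq_abs]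

lemma norm2_sub_rev (a b : ι → ℝ) : norm2 (a - b) = norm2 (b - a) := by
  rw [norm2_eq_norm, norm2_eq_norm, WithLp.equiv_symm_apply, WithLp.toLp_sub, WithLp.toLp_sub, norm_sub_rev]

lemma norm2_le_add (a b : ι → ℝ) : norm2 a ≤ norm2 b + norm2 (a - b) := by
  rw [norm2_eq_norm, norm2_eq_norm, norm2_eq_norm]
  have h : (WithLp.equiv 2 (ι → ℝ)).symm a
      = (WithLp.equiv 2 (ι → ℝ)).symm b + ((WithLp.equiv 2 (ι → ℝ)).symm a - (WithLp.equiv 2 (ι → ℝ)).symm b) := by abel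
  rw [WithLp.equiv_symm_apply, ← WithLp.toLp_sub, ← WithLp.equiv_symm_apply] at h
  calc ‖(WithLp.equiv 2 (ι → ℝ)).symm a‖
      = ‖(WithLp.equiv 2 (ι → ℝ)).symm b + (WithLp.equiv 2 (ι → ℝ)).symm (a - b)‖ := by rw [← h]
    _ ≤ _ := norm_add_le _ _

lemma dot_le_norm2 (x y : ι → ℝ) : x ⬝ᵥ y ≤ norm2 x * norm2 y := by
  have : x ⬝ᵥ y = (inner ℝ ((WithLp.equiv 2 (ι → ℝ)).symm x) ((WithLp.equiv 2 (ι → ℝ)).symm y) : ℝ) := by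
    simp [dotProduct, WithLp.equiv_symm_apply, PiLp.inner_apply, RCLike.inner_apply, mul_comm]
  rw [this, norm2_eq_norm, norm2_eq_norm]
  exact real_inner_le_norm _ _

lemma neg_dot_le_norm2 (x y : ι → ℝ) : -(norm2 x * norm2 y) ≤ x ⬝ᵥ y := by
  have h := dot_le_norm2 (-x) y
  have hn : norm2 (-x) = norm2 x := by
    have : (-x) = (-1 : ℝ) • x := by funext i; simp
    rw [this, norm2_smul]; simp
  rw [neg_dotProduct, hn] at h
  linarith

/-- Frobenius-type bound. -/
lemma norm2_mulVec_le_frob (A : Matrix ι ι ℝ) (x : ι → ℝ) :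
    norm2 (A.mulVec x) ≤ norm2 (fun q : ι × ι => A q.1 q.2) * norm2 x := by
  have h1 : ∑ i, (A.mulVec x i) ^ 2 ≤ (∑ q : ι × ι, (A q.1 q.2) ^ 2) * (∑ j, (x j) ^ 2) := by
    rw [Fintype.sum_prod_type, Finset.sum_mul]
    apply Finset.sum_le_sum
    intro i _
    have : A.mulVec x i = ∑ j, A i j * x j := rfl
    rw [this]
    exact Finset.sum_mul_sq_le_sq_mul_sq _ _ _
  have h2 : norm2 (A.mulVec x) ≤ Real.sqrt ((∑ q : ι × ι, (A q.1 q.2) ^ 2) * (∑ j, (x j) ^ 2)) :=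
    Real.sqrt_le_sqrt h1
  rwa [Real.sqrt_mul (by positivity)] at h2

lemma opNorm_bddAbove (A : Matrix ι ι ℝ) :
    BddAbove {r | ∃ x : ι → ℝ, norm2 x ≤ 1 ∧ r = norm2 (A.mulVec x)} := by
  refine ⟨norm2 (fun q : ι × ι => A q.1 q.2), ?_⟩
  rintro r ⟨x, hx, rfl⟩
  calc norm2 (A.mulVec x) ≤ norm2 (fun q : ι × ι => A q.1 q.2) * norm2 x := norm2_mulVec_le_frob A x
    _ ≤ norm2 (fun q : ι × ι => A q.1 q.2) * 1 :=
        mul_le_mul_of_nonneg_left hx (norm2_nonneg _)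
    _ = _ := mul_one _

lemma norm2_mulVec_le_opNorm (A : Matrix ι ι ℝ) (x : ι → ℝ) :
    norm2 (A.mulVec x) ≤ opNorm A * norm2 x := by
  by_cases hx : x = 0
  · subst hx; rw [Matrix.mulVec_zero, norm2_zero]; simp
  · have hp : 0 < norm2 x := norm2_pos hx
    set u : ι → ℝ := (norm2 x)⁻¹ • x with hu
    have hun : norm2 u = 1 := by
      rw [hu, norm2_smul, abs_of_pos (by positivity)]
      field_simp
    have hmem : norm2 (A.mulVec u) ∈ {r | ∃ x : ι → ℝ, norm2 x ≤ 1 ∧ r = norm2 (A.mulVec x)} :=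
      ⟨u, le_of_eq hun, rfl⟩
    have hle : norm2 (A.mulVec u) ≤ opNorm A := le_csSup (opNorm_bddAbove A) hmem
    have hxu : x = (norm2 x) • u := by
      rw [hu, smul_smul]; field_simp; rw [one_smul]
    calc norm2 (A.mulVec x) = norm2 (A.mulVec ((norm2 x) • u)) := by rw [← hxu]
      _ = norm2 ((norm2 x) • A.mulVec u) := by rw [Matrix.mulVec_smul]
      _ = norm2 x * norm2 (A.mulVec u) := by rw [norm2_smul, abs_of_pos hp]
      _ ≤ norm2 x * opNorm A := mul_le_mul_of_nonneg_left hle (norm2_nonneg _)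
      _ = opNorm A * norm2 x := mul_comm _ _

/-- Invertibility and inverse bound from coercivity. -/
lemma inv_bound [DecidableEq ι] (A : Matrix ι ι ℝ) (c : ℝ) (hc : 0 < c)
    (hco : ∀ x : ι → ℝ, c * norm2 x ^ 2 ≤ x ⬝ᵥ A.mulVec x) :
    IsUnit A.det ∧ ∀ y : ι → ℝ, norm2 (A⁻¹.mulVec y) ≤ c⁻¹ * norm2 y := by
  have hdet : A.det ≠ 0 := by
    intro hd
    obtain ⟨v, hv0, hAv⟩ := Matrix.exists_mulVec_eq_zero_iff.mpr hd
    have := hco v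
    rw [hAv, dotProduct_zero] at this
    have hp : 0 < norm2 v := norm2_pos hv0
    nlinarith [pow_pos hp 2]
  have hdu : IsUnit A.det := isUnit_iff_ne_zero.mpr hdet
  refine ⟨hdu, fun y => ?_⟩
  set x := A⁻¹.mulVec y with hx
  have hAx : A.mulVec x = y := by
    rw [hx, Matrix.mulVec_mulVec, Matrix.mul_nonsing_inv A hdu, Matrix.one_mulVec]
  have h1 : c * norm2 x ^ 2 ≤ x ⬝ᵥ y := by rw [← hAx]; exact hco x
  have h2 : x ⬝ᵥ y ≤ norm2 x * norm2 y := dot_le_norm2 x y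
  by_cases hx0 : norm2 x = 0
  · rw [hx0]; exact mul_nonneg (inv_nonneg.mpr hc.le) (norm2_nonneg y)
  · have hxp : 0 < norm2 x := lt_of_le_of_ne (norm2_nonneg x) (Ne.symm hx0)
    rw [le_inv_mul_iff₀ hc]
    nlinarith

end helpers

/-- Improved two-sided `L₂`-error bound: if
`RIP(k, Σ₁ − Σ₂) ≤ Λ(k; Σ₂)/2` then for all `M ∈ 𝓜(k)`,
`(1/2)‖(Σ₂(M))⁻¹(Γ₁(M) − Σ₁(M)β_M(Σ₂,Γ₂))‖₂ ≤ ‖β_M(Σ₁,Γ₁) − β_M(Σ₂,Γ₂)‖₂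
  ≤ 2‖(Σ₂(M))⁻¹(Γ₁(M) − Σ₁(M)β_M(Σ₂,Γ₂))‖₂`. -/
theorem stmt9 {p : ℕ} (k : ℕ) (hk : 1 ≤ k)
    (Sig1 Sig2 : Matrix (Fin p) (Fin p) ℝ) (hS1 : Sig1.IsSymm) (hS2 : Sig2.IsSymm)
    (G1 G2 : Fin p → ℝ)
    (hLam : 0 < Lam k Sig2)
    (hRIP : RIP k (Sig1 - Sig2) ≤ Lam k Sig2 / 2) :
    ∀ M ∈ Models p k,
      (1 / 2) * norm2 ((subm Sig2 M)⁻¹.mulVec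
          (subv G1 M - (subm Sig1 M).mulVec (betaM M Sig2 G2))) ≤
        norm2 (betaM M Sig1 G1 - betaM M Sig2 G2) ∧
      norm2 (betaM M Sig1 G1 - betaM M Sig2 G2) ≤
        2 * norm2 ((subm Sig2 M)⁻¹.mulVec
          (subv G1 M - (subm Sig1 M).mulVec (betaM M Sig2 G2)))  := by
  intro M hM
  classical
  set Λ := Lam k Sig2 with hLdef
  -- coercivity of Σ₂(M)
  have hsum : ∀ f : Fin p → ℝ, (∀ j ∉ M, f j = 0) →
      ∑ j, f j = ∑ i : {a // a ∈ M}, f i.1 := by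
    intro f hf
    rw [Finset.sum_coe_sort M (fun j => f j)]
    exact (Finset.sum_subset (Finset.subset_univ M) (fun j _ hj => hf j hj)).symm
  have hco2 : ∀ x : {a // a ∈ M} → ℝ, Λ * norm2 x ^ 2 ≤ x ⬝ᵥ (subm Sig2 M).mulVec x := by
    intro x
    by_cases hx : x = 0
    · subst hx
      rw [zero_dotProduct, norm2_zero]
      simp
    · set θ : Fin p → ℝ := fun j => if h : j ∈ M then x ⟨j, h⟩ else 0 with hθdef
      have hθM : ∀ j ∉ M, θ j = 0 := fun j hj => dif_neg hj
      have hθval : ∀ i : {a // a ∈ M}, θ i.1 = x i := by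
        intro i; simp [hθdef, i.2]
      have hθ0 : θ ≠ 0 := by
        obtain ⟨i, hi⟩ := Function.ne_iff.mp hx
        intro h
        apply hi
        have := congrFun h i.1
        rw [hθval i] at this
        simpa using this
      have hsp : sparse k θ := by
        have hsub : {j | θ j ≠ 0} ⊆ ↑M := by
          intro j hj
          by_contra hjm
          exact hj (hθM j hjm)
        calc Set.ncard {j | θ j ≠ 0} ≤ Set.ncard (↑M : Set (Fin p)) :=
              Set.ncard_le_ncard hsub (M.finite_toSet)
          _ = M.card := Set.ncard_coe_finset M
          _ ≤ k := hM.2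
      have hnθ : norm2 θ = norm2 x := by
        unfold norm2
        congr 1
        rw [hsum (fun j => θ j ^ 2) (fun j hj => by show θ j ^ 2 = 0; rw [hθM j hj]; ring)]
        exact Finset.sum_congr rfl (fun i _ => by rw [hθval i])
      have hmv : ∀ i : {a // a ∈ M}, Sig2.mulVec θ i.1 = (subm Sig2 M).mulVec x i := by
        intro i
        show ∑ l, Sig2 i.1 l * θ l = ∑ i', subm Sig2 M i i' * x i'
        rw [hsum (fun l => Sig2 i.1 l * θ l) (fun l hl => by show Sig2 i.1 l * θ l = 0; rw [hθM l hl, mul_zero])]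
        exact Finset.sum_congr rfl (fun i' _ => by rw [hθval i']; rfl)
      have hquad : θ ⬝ᵥ Sig2.mulVec θ = x ⬝ᵥ (subm Sig2 M).mulVec x := by
        show ∑ j, θ j * Sig2.mulVec θ j = ∑ i, x i * (subm Sig2 M).mulVec x i
        rw [hsum (fun j => θ j * Sig2.mulVec θ j) (fun j hj => by show θ j * (Sig2 *ᵥ θ) j = 0; rw [hθM j hj, zero_mul])]
        exact Finset.sum_congr rfl (fun i _ => by rw [hmv i, hθval i])
      have hbdd : BddBelow {r | ∃ φ : Fin p → ℝ, φ ≠ 0 ∧ sparse k φ ∧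
          r = φ ⬝ᵥ Sig2.mulVec φ / norm2 φ ^ 2} := by
        refine ⟨-(norm2 (fun q : Fin p × Fin p => Sig2 q.1 q.2)), ?_⟩
        rintro r ⟨φ, hφ0, -, rfl⟩
        have hp : 0 < norm2 φ := norm2_pos hφ0
        have h1 := neg_dot_le_norm2 φ (Sig2.mulVec φ)
        have h2 := norm2_mulVec_le_frob Sig2 φ
        rw [le_div_iff₀ (pow_pos hp 2)]
        nlinarith [norm2_nonneg φ, norm2_nonneg (Sig2.mulVec φ),
          norm2_nonneg (fun q : Fin p × Fin p => Sig2 q.1 q.2)]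
      have hmem : θ ⬝ᵥ Sig2.mulVec θ / norm2 θ ^ 2 ∈ {r | ∃ φ : Fin p → ℝ, φ ≠ 0 ∧ sparse k φ ∧
          r = φ ⬝ᵥ Sig2.mulVec φ / norm2 φ ^ 2} := ⟨θ, hθ0, hsp, rfl⟩
      have hle : Λ ≤ θ ⬝ᵥ Sig2.mulVec θ / norm2 θ ^ 2 := csInf_le hbdd hmem
      have hθp : 0 < norm2 θ ^ 2 := pow_pos (norm2_pos hθ0) 2
      rw [le_div_iff₀ hθp] at hle
      rw [← hquad, ← hnθ]
      exact hle
  -- operator-norm bound on E = (Σ₁ - Σ₂)(M)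
  set E := subm (Sig1 - Sig2) M with hEdef
  have hsplit : subm Sig1 M = subm Sig2 M + E := by
    ext i j
    simp [hEdef, subm, Matrix.sub_apply]
  have hEop : opNorm E ≤ Λ / 2 := by
    refine le_trans ?_ hRIP
    have hb : BddAbove (Set.range fun N : Models p k => opNorm (subm (Sig1 - Sig2) N.1)) :=
      Set.Finite.bddAbove (Set.finite_range _)
    exact le_ciSup hb (⟨M, hM⟩ : Models p k)
  have hE : ∀ x : {a // a ∈ M} → ℝ, norm2 (E.mulVec x) ≤ Λ / 2 * norm2 x := by
    intro x
    calc norm2 (E.mulVec x) ≤ opNorm E * norm2 x := norm2_mulVec_le_opNorm E x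
      _ ≤ Λ / 2 * norm2 x := mul_le_mul_of_nonneg_right hEop (norm2_nonneg x)
  -- coercivity of Σ₁(M)
  have hco1 : ∀ x : {a // a ∈ M} → ℝ, Λ / 2 * norm2 x ^ 2 ≤ x ⬝ᵥ (subm Sig1 M).mulVec x := by
    intro x
    have h1 := hco2 x
    have h2 := neg_dot_le_norm2 x (E.mulVec x)
    have h3 := hE x
    have h4 : x ⬝ᵥ (subm Sig1 M).mulVec x
        = x ⬝ᵥ (subm Sig2 M).mulVec x + x ⬝ᵥ E.mulVec x := by
      rw [hsplit, Matrix.add_mulVec, dotProduct_add]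
    rw [h4]
    nlinarith [norm2_nonneg x, norm2_sq x, sq_nonneg (norm2 x)]
  obtain ⟨hu2, hinv2⟩ := inv_bound (subm Sig2 M) Λ hLam hco2
  obtain ⟨hu1, hinv1⟩ := inv_bound (subm Sig1 M) (Λ / 2) (by linarith) hco1
  -- main algebra
  set β₁ := betaM M Sig1 G1 with hβ₁
  set β₂ := betaM M Sig2 G2 with hβ₂
  set δ := β₁ - β₂ with hδ
  set w := subv G1 M - (subm Sig1 M).mulVec β₂ with hw
  set d := (subm Sig2 M)⁻¹.mulVec w with hd
  have hA1β1 : (subm Sig1 M).mulVec β₁ = subv G1 M := by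
    rw [hβ₁]
    show (subm Sig1 M).mulVec ((subm Sig1 M)⁻¹.mulVec (subv G1 M)) = subv G1 M
    rw [Matrix.mulVec_mulVec, Matrix.mul_nonsing_inv _ hu1, Matrix.one_mulVec]
  have hA1δ : (subm Sig1 M).mulVec δ = w := by
    rw [hδ, Matrix.mulVec_sub, hA1β1, hw]
  have hdδ : d - δ = (subm Sig2 M)⁻¹.mulVec (E.mulVec δ) := by
    have h1 : (subm Sig2 M)⁻¹.mulVec ((subm Sig2 M).mulVec δ) = δ := by
      rw [Matrix.mulVec_mulVec, Matrix.nonsing_inv_mul _ hu2, Matrix.one_mulVec]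
    have h2 : w - (subm Sig2 M).mulVec δ = E.mulVec δ := by
      rw [← hA1δ, hsplit, Matrix.add_mulVec]
      abel
    calc d - δ = (subm Sig2 M)⁻¹.mulVec w - (subm Sig2 M)⁻¹.mulVec ((subm Sig2 M).mulVec δ) := by
          rw [h1, hd]
      _ = (subm Sig2 M)⁻¹.mulVec (w - (subm Sig2 M).mulVec δ) := (Matrix.mulVec_sub _ _ _).symm
      _ = _ := by rw [h2]
  have hbound : norm2 (d - δ) ≤ 1 / 2 * norm2 δ := by
    rw [hdδ]
    calc norm2 ((subm Sig2 M)⁻¹.mulVec (E.mulVec δ)) ≤ Λ⁻¹ * norm2 (E.mulVec δ) := hinv2 _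
      _ ≤ Λ⁻¹ * (Λ / 2 * norm2 δ) :=
          mul_le_mul_of_nonneg_left (hE δ) (inv_nonneg.mpr hLam.le)
      _ = 1 / 2 * norm2 δ := by field_simp
  have h3 : norm2 δ ≤ norm2 d + norm2 (δ - d) := norm2_le_add δ d
  have h4 : norm2 d ≤ norm2 δ + norm2 (d - δ) := norm2_le_add d δ
  rw [norm2_sub_rev δ d] at h3
  have hdn := norm2_nonneg δ
  have hdd := norm2_nonneg d
  constructor
  · linarith
  · linarith
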